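/- Assume t_max ≥ ∑_{b∈L} r_b and the set 𝔏 = {b ∈ L : r_b > 0} is nonempty. Let D = t_max − ∑_{b∈L} r_b and ℓ = ⌊D/|𝔏|⌋, and let {t_b}_{b∈L} be any equal-opportunity assignment, i.e., t_b = 0 whenever r_b = 0, t_b ∈ {r_b+ℓ, r_b+ℓ+1} for every b ∈ 𝔏, and ∑_{b∈L} t_b = t_max. Write SOL = ∑_{b∈L} E(r_b,t_b) and let OPT be the optimal value of problem (B). Then SOL ≥ (1-p)·OPT, and OPT − SOL ≤ (1-p)·∑_{b∈𝔏} ∑_{j=r_b+ℓ}^{r_b+D−1} β_p(j,r_b). -/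

import Mathlib

/-- `betaP p t r = ∑_{i=0}^{r-1} C(t,i) (1-p)^i p^(t-i)`. -/
noncomputable def betaP (p : ℝ) (t r : ℕ) : ℝ :=
  ∑ i ∈ Finset.range r, (t.choose i : ℝ) * (1 - p) ^ i * p ^ (t - i)

/-- Expected rank function `E(r,t) = ∑_{i=0}^{t} C(t,i) (1-p)^i p^(t-i) * min{i,r}`. -/
noncomputable def expRank (p : ℝ) (r t : ℕ) : ℝ :=
  ∑ i ∈ Finset.range (t + 1),
    (t.choose i : ℝ) * (1 - p) ^ i * p ^ (t - i) * ((min i r : ℕ) : ℝ)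

open Finset

namespace Stmt18

variable {p : ℝ}

lemma bb_nonneg (hp0 : 0 ≤ p) (hp1 : p ≤ 1) (t i : ℕ) :
    0 ≤ (t.choose i : ℝ) * (1 - p) ^ i * p ^ (t - i) :=
  mul_nonneg (mul_nonneg (Nat.cast_nonneg _) (pow_nonneg (by linarith) _)) (pow_nonneg hp0 _)

lemma sum_bb (t : ℕ) :
    ∑ i ∈ Finset.range (t + 1), (t.choose i : ℝ) * (1 - p) ^ i * p ^ (t - i) = 1 := by
  have h := add_pow (1 - p) p t
  have h2 : (1 - p + p) = (1 : ℝ) := by ring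
  rw [h2, one_pow] at h
  calc ∑ i ∈ Finset.range (t + 1), (t.choose i : ℝ) * (1 - p) ^ i * p ^ (t - i)
      = ∑ i ∈ Finset.range (t + 1), (1 - p) ^ i * p ^ (t - i) * (t.choose i : ℝ) := by
        exact Finset.sum_congr rfl fun i _ => by ring
    _ = 1 := h.symm

lemma betaP_nonneg (hp0 : 0 ≤ p) (hp1 : p ≤ 1) (t r : ℕ) : 0 ≤ betaP p t r :=
  Finset.sum_nonneg fun i _ => bb_nonneg hp0 hp1 t i

lemma betaP_eq_one {t r : ℕ} (h : t < r) : betaP p t r = 1 := by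
  unfold betaP
  rw [← Finset.sum_range_add_sum_Ico _ (show t + 1 ≤ r from h)]
  have h2 : ∑ i ∈ Ico (t + 1) r, (t.choose i : ℝ) * (1 - p) ^ i * p ^ (t - i) = 0 := by
    apply Finset.sum_eq_zero
    intro i hi
    rw [Nat.choose_eq_zero_of_lt (mem_Ico.mp hi).1]
    simp
  rw [sum_bb, h2]
  norm_num

lemma betaP_le_one (hp0 : 0 ≤ p) (hp1 : p ≤ 1) (t r : ℕ) : betaP p t r ≤ 1 := by
  rcases le_or_gt r (t + 1) with h | h
  · calc betaP p t r ≤ ∑ i ∈ Finset.range (t + 1), (t.choose i : ℝ) * (1 - p) ^ i * p ^ (t - i) :=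
        Finset.sum_le_sum_of_subset_of_nonneg (Finset.range_subset_range.2 h)
          (fun i _ _ => bb_nonneg hp0 hp1 t i)
      _ = 1 := sum_bb t
  · exact le_of_eq (betaP_eq_one (by omega))

lemma binom_step (f : ℕ → ℝ) (t : ℕ) :
    ∑ i ∈ range (t + 2), ((t + 1).choose i : ℝ) * (1 - p) ^ i * p ^ (t + 1 - i) * f i
      = p * ∑ i ∈ range (t + 1), (t.choose i : ℝ) * (1 - p) ^ i * p ^ (t - i) * f i
        + (1 - p) * ∑ i ∈ range (t + 1), (t.choose i : ℝ) * (1 - p) ^ i * p ^ (t - i) * f (i + 1) := by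
  rw [Finset.sum_range_succ']
  have hA : ∀ i ∈ range (t + 1),
      ((t + 1).choose (i + 1) : ℝ) * (1 - p) ^ (i + 1) * p ^ (t + 1 - (i + 1)) * f (i + 1)
      = (t.choose (i + 1) : ℝ) * (1 - p) ^ (i + 1) * p ^ (t - i) * f (i + 1)
        + (t.choose i : ℝ) * (1 - p) ^ (i + 1) * p ^ (t - i) * f (i + 1) := by
    intro i _
    have h1 : (t + 1).choose (i + 1) = t.choose i + t.choose (i + 1) := Nat.choose_succ_succ' t i
    have h2 : t + 1 - (i + 1) = t - i := by omega
    rw [h1, h2]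
    push_cast
    ring
  rw [Finset.sum_congr rfl hA, Finset.sum_add_distrib]
  have hg0 : ((t + 1).choose 0 : ℝ) * (1 - p) ^ 0 * p ^ (t + 1 - 0) * f 0 = p ^ (t + 1) * f 0 := by
    simp
  have hS1 : p * ∑ i ∈ range (t + 1), (t.choose i : ℝ) * (1 - p) ^ i * p ^ (t - i) * f i
      = (∑ i ∈ range (t + 1), (t.choose (i + 1) : ℝ) * (1 - p) ^ (i + 1) * p ^ (t - i) * f (i + 1))
        + p ^ (t + 1) * f 0 := by
    rw [Finset.mul_sum, Finset.sum_range_succ']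
    rw [Finset.sum_range_succ
      (fun i => (t.choose (i + 1) : ℝ) * (1 - p) ^ (i + 1) * p ^ (t - i) * f (i + 1))]
    have hlast : (t.choose (t + 1) : ℝ) = 0 := by
      simp [Nat.choose_eq_zero_of_lt]
    rw [hlast]
    have hterms : ∀ i ∈ range t,
        p * ((t.choose (i + 1) : ℝ) * (1 - p) ^ (i + 1) * p ^ (t - (i + 1)) * f (i + 1))
        = (t.choose (i + 1) : ℝ) * (1 - p) ^ (i + 1) * p ^ (t - i) * f (i + 1) := by
      intro i hi
      have hi' : i < t := mem_range.mp hi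
      have : t - i = (t - (i + 1)) + 1 := by omega
      rw [this, pow_succ]
      ring
    rw [Finset.sum_congr rfl hterms]
    simp [pow_succ]
    ring
  have hS2 : (1 - p) * ∑ i ∈ range (t + 1), (t.choose i : ℝ) * (1 - p) ^ i * p ^ (t - i) * f (i + 1)
      = ∑ i ∈ range (t + 1), (t.choose i : ℝ) * (1 - p) ^ (i + 1) * p ^ (t - i) * f (i + 1) := by
    rw [Finset.mul_sum]
    exact Finset.sum_congr rfl fun i _ => by ring
  rw [hg0, hS1, hS2]
  ring

lemma sum_bb_ite (t r : ℕ) :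
    ∑ i ∈ range (t + 1),
        (t.choose i : ℝ) * (1 - p) ^ i * p ^ (t - i) * (if i < r then (1 : ℝ) else 0)
      = betaP p t r := by
  set g : ℕ → ℝ := fun i =>
    (t.choose i : ℝ) * (1 - p) ^ i * p ^ (t - i) * (if i < r then (1 : ℝ) else 0) with hg
  rcases le_or_gt r (t + 1) with h | h
  · have h1 : ∑ i ∈ range r, g i = betaP p t r := by
      unfold betaP
      refine Finset.sum_congr rfl fun i hi => ?_
      rw [hg]
      simp only []
      rw [if_pos (mem_range.mp hi), mul_one]
    have h2 : ∑ i ∈ Ico r (t + 1), g i = 0 := by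
      apply Finset.sum_eq_zero
      intro i hi
      have hir := (mem_Ico.mp hi).1
      rw [hg]
      simp only []
      rw [if_neg (by omega), mul_zero]
    calc ∑ i ∈ range (t + 1), g i
        = (∑ i ∈ range r, g i) + ∑ i ∈ Ico r (t + 1), g i :=
          (Finset.sum_range_add_sum_Ico g h).symm
      _ = betaP p t r := by rw [h1, h2, add_zero]
  · have h1 : ∀ i ∈ range (t + 1),
        g i = (t.choose i : ℝ) * (1 - p) ^ i * p ^ (t - i) := by
      intro i hi
      have := mem_range.mp hi
      rw [hg]
      simp only []
      rw [if_pos (by omega), mul_one]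
    calc ∑ i ∈ range (t + 1), g i
        = ∑ i ∈ range (t + 1), (t.choose i : ℝ) * (1 - p) ^ i * p ^ (t - i) :=
          Finset.sum_congr rfl h1
      _ = 1 := sum_bb t
      _ = betaP p t r := (betaP_eq_one (show t < r by omega)).symm

lemma expRank_succ (r t : ℕ) :
    expRank p r (t + 1) = expRank p r t + (1 - p) * betaP p t r := by
  unfold expRank
  have key := binom_step (p := p) (fun i => ((min i r : ℕ) : ℝ)) t
  rw [show t + 1 + 1 = t + 2 from rfl] at *
  rw [key]
  have hmin : ∀ i : ℕ, ((min (i + 1) r : ℕ) : ℝ)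
      = ((min i r : ℕ) : ℝ) + (if i < r then (1 : ℝ) else 0) := by
    intro i
    split_ifs with h
    · have : min (i + 1) r = min i r + 1 := by omega
      rw [this]; push_cast; ring
    · have : min (i + 1) r = min i r := by omega
      rw [this]; ring
  have h2 : ∑ i ∈ range (t + 1), (t.choose i : ℝ) * (1 - p) ^ i * p ^ (t - i) * ((min (i + 1) r : ℕ) : ℝ)
      = (∑ i ∈ range (t + 1), (t.choose i : ℝ) * (1 - p) ^ i * p ^ (t - i) * ((min i r : ℕ) : ℝ))
        + betaP p t r := by
    rw [← sum_bb_ite t r, ← Finset.sum_add_distrib]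
    refine Finset.sum_congr rfl fun i _ => ?_
    rw [hmin i]
    ring
  rw [h2]
  ring

lemma expRank_eq (r t : ℕ) :
    expRank p r t = (1 - p) * ∑ j ∈ range t, betaP p j r := by
  induction t with
  | zero => simp [expRank]
  | succ t ih => rw [expRank_succ, ih, Finset.sum_range_succ]; ring

lemma expRank_nonneg (hp0 : 0 ≤ p) (hp1 : p ≤ 1) (r t : ℕ) : 0 ≤ expRank p r t :=
  Finset.sum_nonneg fun i _ => mul_nonneg
    (mul_nonneg (mul_nonneg (Nat.cast_nonneg _) (pow_nonneg (by linarith) _)) (pow_nonneg hp0 _))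
    (Nat.cast_nonneg _)

lemma expRank_le (hp0 : 0 ≤ p) (hp1 : p ≤ 1) (r t : ℕ) : expRank p r t ≤ (r : ℝ) := by
  unfold expRank
  calc ∑ i ∈ range (t + 1), (t.choose i : ℝ) * (1 - p) ^ i * p ^ (t - i) * ((min i r : ℕ) : ℝ)
      ≤ ∑ i ∈ range (t + 1), (t.choose i : ℝ) * (1 - p) ^ i * p ^ (t - i) * (r : ℝ) := by
        refine Finset.sum_le_sum fun i _ => ?_
        refine mul_le_mul_of_nonneg_left ?_
          (mul_nonneg (mul_nonneg (Nat.cast_nonneg _) (pow_nonneg (by linarith) _)) (pow_nonneg hp0 _))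
        exact_mod_cast min_le_right i r
    _ = (r : ℝ) := by rw [← Finset.sum_mul, sum_bb, one_mul]

lemma nat_sum_sub {ι : Type*} (s : Finset ι) (x : ι → ℕ) (D : ℕ) :
    ∑ b ∈ s, (x b - D) ≤ (∑ b ∈ s, x b) - D := by
  induction s using Finset.cons_induction with
  | empty => simp
  | cons a s ha ih => rw [Finset.sum_cons, Finset.sum_cons]; omega

lemma betaP_zero (t : ℕ) : betaP p t 0 = 0 := by simp [betaP]

lemma block_upper (hp0 : 0 ≤ p) (hp1 : p ≤ 1) (rr t' D : ℕ) :
    ∑ j ∈ range t', betaP p j rr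
      ≤ ((min t' rr : ℕ) : ℝ) + (∑ j ∈ Ico rr (rr + D), betaP p j rr)
        + ((t' - rr - D : ℕ) : ℝ) := by
  set m := min t' rr with hm
  set c := min t' (rr + D) with hc
  have hmc : m ≤ c := by omega
  have hct : c ≤ t' := min_le_left _ _
  have hmt : m ≤ t' := min_le_left _ _
  have e1 : ∑ j ∈ range t', betaP p j rr
      = (∑ j ∈ range m, betaP p j rr) + ((∑ j ∈ Ico m c, betaP p j rr)
        + ∑ j ∈ Ico c t', betaP p j rr) := by
    rw [Finset.sum_Ico_consecutive _ hmc hct, Finset.sum_range_add_sum_Ico _ hmt]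
  rw [e1]
  have h1 : ∑ j ∈ range m, betaP p j rr = ((m : ℕ) : ℝ) := by
    rw [Finset.sum_congr rfl (fun j hj => betaP_eq_one (p := p)
      (show j < rr by have := mem_range.mp hj; omega))]
    simp
  have h2 : ∑ j ∈ Ico m c, betaP p j rr ≤ ∑ j ∈ Ico rr (rr + D), betaP p j rr := by
    apply Finset.sum_le_sum_of_subset_of_nonneg
    · intro j hj
      rw [mem_Ico] at *
      omega
    · exact fun j _ _ => betaP_nonneg hp0 hp1 j rr
  have h3 : ∑ j ∈ Ico c t', betaP p j rr ≤ ((t' - rr - D : ℕ) : ℝ) := by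
    calc ∑ j ∈ Ico c t', betaP p j rr ≤ (Ico c t').card • (1 : ℝ) :=
          Finset.sum_le_card_nsmul _ _ _ (fun j _ => betaP_le_one hp0 hp1 j rr)
      _ = ((t' - c : ℕ) : ℝ) := by rw [Nat.card_Ico]; simp
      _ = ((t' - rr - D : ℕ) : ℝ) := by congr 1; omega
  rw [h1]
  linarith

lemma block_lower (hp0 : 0 ≤ p) (hp1 : p ≤ 1) {rr ℓ tt : ℕ} (h : rr + ℓ ≤ tt) :
    (rr : ℝ) + ∑ j ∈ Ico rr (rr + ℓ), betaP p j rr ≤ ∑ j ∈ range tt, betaP p j rr := by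
  have e1 : (∑ j ∈ range rr, betaP p j rr) + ∑ j ∈ Ico rr (rr + ℓ), betaP p j rr
      = ∑ j ∈ range (rr + ℓ), betaP p j rr :=
    Finset.sum_range_add_sum_Ico _ (by omega)
  have h1 : ∑ j ∈ range rr, betaP p j rr = (rr : ℝ) := by
    rw [Finset.sum_congr rfl (fun j hj => betaP_eq_one (p := p) (mem_range.mp hj))]
    simp
  have h2 : ∑ j ∈ range (rr + ℓ), betaP p j rr ≤ ∑ j ∈ range tt, betaP p j rr :=
    Finset.sum_le_sum_of_subset_of_nonneg (Finset.range_subset_range.2 h)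
      (fun j _ _ => betaP_nonneg hp0 hp1 j rr)
  linarith [e1, h1, h2]

end Stmt18

open Stmt18

theorem stmt18 {ι : Type*} (p : ℝ) (hp0 : 0 < p) (hp1 : p < 1)
    (L : Finset ι) (r : ι → ℕ) (tmax : ℕ)
    (hle : (∑ b ∈ L, r b) ≤ tmax)
    (hne : (L.filter fun b => 0 < r b).Nonempty)
    (t : ι → ℕ)
    (h0 : ∀ b ∈ L, r b = 0 → t b = 0)
    (hEO : ∀ b ∈ L.filter (fun b => 0 < r b),
      t b = r b + (tmax - ∑ b ∈ L, r b) / (L.filter fun b => 0 < r b).card ∨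
      t b = r b + (tmax - ∑ b ∈ L, r b) / (L.filter fun b => 0 < r b).card + 1)
    (hfeas : (∑ b ∈ L, t b) = tmax)
    (OPT : ℝ)
    (hOPT : IsGreatest {x : ℝ | ∃ t' : ι → ℕ, (∑ b ∈ L, t' b) = tmax ∧
      x = ∑ b ∈ L, expRank p (r b) (t' b)} OPT) :
    (1 - p) * OPT ≤ ∑ b ∈ L, expRank p (r b) (t b) ∧
    OPT - (∑ b ∈ L, expRank p (r b) (t b)) ≤
      (1 - p) * ∑ b ∈ L.filter (fun b => 0 < r b),
        ∑ j ∈ Finset.Ico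
          (r b + (tmax - ∑ b ∈ L, r b) / (L.filter fun b => 0 < r b).card)
          (r b + (tmax - ∑ b ∈ L, r b)), betaP p j (r b) := by
  have hp0' : (0:ℝ) ≤ p := le_of_lt hp0
  have hp1' : p ≤ 1 := le_of_lt hp1
  have h1p : (0:ℝ) ≤ 1 - p := by linarith
  set 𝔏 := L.filter (fun b => 0 < r b) with h𝔏
  set R := ∑ b ∈ L, r b with hR
  set D := tmax - R with hD
  set ℓ := D / 𝔏.card with hℓ
  set Sl := ∑ b ∈ 𝔏, ∑ j ∈ Ico (r b) (r b + ℓ), betaP p j (r b) with hSl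
  set SD := ∑ b ∈ 𝔏, ∑ j ∈ Ico (r b) (r b + D), betaP p j (r b) with hSD
  -- sum of ranks over filter equals R
  have hRf : ∑ b ∈ 𝔏, (r b : ℝ) = (R : ℝ) := by
    rw [hR]
    push_cast
    apply Finset.sum_filter_of_ne
    intro b _ hne'
    have : r b ≠ 0 := by exact_mod_cast fun h => hne' (by rw [h]; simp)
    omega
  -- SOL lower bound
  have hSOL : (1 - p) * ((R : ℝ) + Sl) ≤ ∑ b ∈ L, expRank p (r b) (t b) := by
    have h1 : ∀ b ∈ 𝔏,
        (1 - p) * ((r b : ℝ) + ∑ j ∈ Ico (r b) (r b + ℓ), betaP p j (r b))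
          ≤ expRank p (r b) (t b) := by
      intro b hb
      rw [expRank_eq]
      have hge : r b + ℓ ≤ t b := by rcases hEO b hb with h | h <;> omega
      exact mul_le_mul_of_nonneg_left (block_lower hp0' hp1' hge) h1p
    calc (1 - p) * ((R : ℝ) + Sl)
        = ∑ b ∈ 𝔏, (1 - p) * ((r b : ℝ) + ∑ j ∈ Ico (r b) (r b + ℓ), betaP p j (r b)) := by
          rw [← Finset.mul_sum, Finset.sum_add_distrib, hRf]
      _ ≤ ∑ b ∈ 𝔏, expRank p (r b) (t b) := Finset.sum_le_sum h1
      _ ≤ ∑ b ∈ L, expRank p (r b) (t b) :=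
          Finset.sum_le_sum_of_subset_of_nonneg (Finset.filter_subset _ _)
            (fun b _ _ => expRank_nonneg hp0' hp1' _ _)
  obtain ⟨⟨t', ht'sum, ht'eq⟩, _hub⟩ := hOPT
  -- OPT ≤ R
  have hOPTR : OPT ≤ (R : ℝ) := by
    rw [ht'eq]
    calc ∑ b ∈ L, expRank p (r b) (t' b) ≤ ∑ b ∈ L, (r b : ℝ) :=
          Finset.sum_le_sum fun b _ => expRank_le hp0' hp1' _ _
      _ = (R : ℝ) := by rw [hR]; push_cast; rfl
  -- OPT upper bound
  have hOPTle : OPT ≤ (1 - p) * ((R : ℝ) + SD) := by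
    rw [ht'eq]
    have hper : ∀ b ∈ L, expRank p (r b) (t' b)
        ≤ (1 - p) * (((min (t' b) (r b) : ℕ) : ℝ)
            + (∑ j ∈ Ico (r b) (r b + D), betaP p j (r b))
            + ((t' b - r b - D : ℕ) : ℝ)) := by
      intro b _
      rw [expRank_eq]
      exact mul_le_mul_of_nonneg_left (block_upper hp0' hp1' (r b) (t' b) D) h1p
    have hSDfull : ∑ b ∈ L, (∑ j ∈ Ico (r b) (r b + D), betaP p j (r b)) = SD := by
      rw [hSD]
      symm
      apply Finset.sum_filter_of_ne
      intro b _ hne'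
      by_contra hc
      have hr0 : r b = 0 := by omega
      apply hne'
      rw [hr0]
      exact Finset.sum_eq_zero fun j _ => betaP_zero j
    have hnat : (∑ b ∈ L, min (t' b) (r b)) + (∑ b ∈ L, (t' b - r b - D)) ≤ R := by
      have e1 : ∑ b ∈ L, (t' b - r b) + R = tmax + ∑ b ∈ L, (r b - t' b) := by
        rw [hR, ← ht'sum, ← Finset.sum_add_distrib, ← Finset.sum_add_distrib]
        exact Finset.sum_congr rfl fun b _ => by omega
      have e2 : ∑ b ∈ L, min (t' b) (r b) + ∑ b ∈ L, (r b - t' b) = R := by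
        rw [hR, ← Finset.sum_add_distrib]
        exact Finset.sum_congr rfl fun b _ => by omega
      have e3 := nat_sum_sub L (fun b => t' b - r b) D
      omega
    calc ∑ b ∈ L, expRank p (r b) (t' b)
        ≤ ∑ b ∈ L, (1 - p) * (((min (t' b) (r b) : ℕ) : ℝ)
            + (∑ j ∈ Ico (r b) (r b + D), betaP p j (r b))
            + ((t' b - r b - D : ℕ) : ℝ)) := Finset.sum_le_sum hper
      _ = (1 - p) * ((∑ b ∈ L, ((min (t' b) (r b) : ℕ) : ℝ))
            + (∑ b ∈ L, ∑ j ∈ Ico (r b) (r b + D), betaP p j (r b))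
            + (∑ b ∈ L, ((t' b - r b - D : ℕ) : ℝ))) := by
          rw [← Finset.mul_sum, Finset.sum_add_distrib, Finset.sum_add_distrib]
      _ ≤ (1 - p) * ((R : ℝ) + SD) := by
          apply mul_le_mul_of_nonneg_left _ h1p
          rw [hSDfull]
          have hcast : (∑ b ∈ L, ((min (t' b) (r b) : ℕ) : ℝ))
              + (∑ b ∈ L, ((t' b - r b - D : ℕ) : ℝ)) ≤ (R : ℝ) := by
            rw [← Nat.cast_sum, ← Nat.cast_sum, ← Nat.cast_add]
            exact_mod_cast hnat
          linarith
  have hSl0 : (0:ℝ) ≤ Sl :=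
    Finset.sum_nonneg fun b _ => Finset.sum_nonneg fun j _ => betaP_nonneg hp0' hp1' _ _
  constructor
  · have ha : (1 - p) * OPT ≤ (1 - p) * (R : ℝ) := mul_le_mul_of_nonneg_left hOPTR h1p
    nlinarith
  · have hsplit : SD = Sl + ∑ b ∈ 𝔏, ∑ j ∈ Ico (r b + ℓ) (r b + D), betaP p j (r b) := by
      rw [hSD, hSl, ← Finset.sum_add_distrib]
      refine Finset.sum_congr rfl fun b _ => ?_
      have hlD : ℓ ≤ D := Nat.div_le_self D 𝔏.card
      exact (Finset.sum_Ico_consecutive _ (Nat.le_add_right _ _) (Nat.add_le_add_left hlD _)).symm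
    have hkey : (1 - p) * ((R : ℝ) + SD)
        = (1 - p) * ((R : ℝ) + Sl)
          + (1 - p) * ∑ b ∈ 𝔏, ∑ j ∈ Ico (r b + ℓ) (r b + D), betaP p j (r b) := by
      rw [hsplit]; ring
    linarith
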